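/- arXiv:1407.4640 — 3 statements merged into one kernel-verified Lean document; each statement's English description precedes it below -/
import Mathlib

section
/- Let r ≥ 1, let y₁, …, y_r be integers with ∑_{i=1}^{r} yᵢ = 0, and let k be a natural number with ⌈log₂ r⌉ < k. Then for every j ∈ ℕ there exists an integer δ with |δ| < r such that ∑_{i=1}^{r} P^k_j(yᵢ) ≡ δ (mod 2^k). -/
/-- `P k j z = sign z * (j`-th digit of `|z|` in base `2^k`). -/
def P (k j : ℕ) (z : ℤ) : ℤ := z.sign * ((|z| / 2 ^ (j * k)) % 2 ^ k)

theorem digit_sum_small_mod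
    (r : ℕ) (hr : 1 ≤ r) (y : Fin r → ℤ) (hsum : ∑ i, y i = 0)
    (k : ℕ) (hk : Nat.clog 2 r < k) :
    ∀ j : ℕ, ∃ δ : ℤ, |δ| < (r : ℤ) ∧
      (2 ^ k : ℤ) ∣ (∑ i, P k j (y i)) - δ := by
  intro j
  set m : ℤ := 2 ^ (j * k) with hm
  have hm0 : (0 : ℤ) < m := by positivity
  refine ⟨∑ i, (y i).sign * (|y i| / m), ?_, ?_⟩
  · have key : (∑ i, (y i).sign * (|y i| / m)) * m
        = ∑ i, ((y i).sign * (|y i| / m) * m - y i) := by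
      rw [Finset.sum_sub_distrib, hsum, sub_zero, Finset.sum_mul]
    have hb : |(∑ i, (y i).sign * (|y i| / m)) * m| ≤ ∑ _i : Fin r, (m - 1) := by
      rw [key]
      refine (Finset.abs_sum_le_sum_abs _ _).trans (Finset.sum_le_sum ?_)
      intro i _
      have hz : (y i).sign * |y i| = y i := Int.sign_mul_abs _
      have hdm : m * (|y i| / m) + |y i| % m = |y i| := Int.mul_ediv_add_emod _ _
      have h1 : (y i).sign * (|y i| / m) * m - y i = -((y i).sign * (|y i| % m)) := by
        linear_combination (y i).sign * hdm + hz
      rw [h1, abs_neg, abs_mul]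
      have hs : |(y i).sign| ≤ 1 := by
        rcases y i with n | n
        · cases n <;> simp [Int.sign]
        · simp [Int.sign]
      have he1 : 0 ≤ |y i| % m := Int.emod_nonneg _ (ne_of_gt hm0)
      have he2 : |y i| % m < m := Int.emod_lt_of_pos _ hm0
      have : |(|y i| % m)| = |y i| % m := abs_of_nonneg he1
      nlinarith
    have hrm : (∑ _i : Fin r, (m - 1)) = (r : ℤ) * (m - 1) := by
      simp [Finset.sum_const, mul_comm]
      ring
    rw [hrm] at hb
    have h2 : |(∑ i, (y i).sign * (|y i| / m))| * m < (r : ℤ) * m := by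
      calc |(∑ i, (y i).sign * (|y i| / m))| * m
          = |(∑ i, (y i).sign * (|y i| / m)) * m| := by
            rw [abs_mul, abs_of_pos hm0]
        _ ≤ (r : ℤ) * (m - 1) := hb
        _ < (r : ℤ) * m := by
            have : (1 : ℤ) ≤ (r : ℤ) := by exact_mod_cast hr
            nlinarith
    exact lt_of_mul_lt_mul_right h2 (le_of_lt hm0)
  · rw [← Finset.sum_sub_distrib]
    refine Finset.dvd_sum fun i _ => ⟨-((y i).sign * ((|y i| / m) / 2 ^ k)), ?_⟩
    have := Int.emod_def (|y i| / m) (2 ^ k)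
    unfold P
    rw [← hm, this]
    ring
end

section
/- Let r ≥ 1, let y₁, …, y_r be integers with ∑_{i=1}^{r} yᵢ = 0, and let t, k be natural numbers with ⌈log₂ r⌉ < t and ⌈log₂ r⌉ < k. For each i set ỹᵢ = sign(yᵢ) · ⌊|yᵢ| / 2^t⌋ (the arithmetic right shift of yᵢ by t bits). Then for every j ∈ ℕ there exists an integer δ with |δ| < r such that ∑_{i=1}^{r} P^k_j(ỹᵢ) ≡ δ (mod 2^k). -/
lemma ediv_pow_pow (a : ℤ) (ha : 0 ≤ a) (m n : ℕ) :
    a / 2 ^ m / 2 ^ n = a / 2 ^ (m + n) := by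
  lift a to ℕ using ha
  have h1 : ((2:ℤ) ^ m) = ((2 ^ m : ℕ) : ℤ) := by push_cast; ring
  have h2 : ((2:ℤ) ^ n) = ((2 ^ n : ℕ) : ℤ) := by push_cast; ring
  have h3 : ((2:ℤ) ^ (m + n)) = ((2 ^ (m + n) : ℕ) : ℤ) := by push_cast; ring
  rw [h1, h2, h3, ← Int.natCast_ediv, ← Int.natCast_ediv, ← Int.natCast_ediv,
    Nat.div_div_eq_div_mul, ← pow_add]

lemma sign_cases (z : ℤ) : z.sign = -1 ∨ z.sign = 0 ∨ z.sign = 1 := by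
  rcases lt_trichotomy z 0 with h | h | h
  · exact Or.inl (Int.sign_eq_neg_one_iff_neg.mpr h)
  · exact Or.inr (Or.inl (by simp [h]))
  · exact Or.inr (Or.inr (Int.sign_eq_one_iff_pos.mpr h))

lemma P_sub_dvd (k j : ℕ) (s a : ℤ) (ha : 0 ≤ a) (hs : s = -1 ∨ s = 0 ∨ s = 1) :
    (2 ^ k : ℤ) ∣ P k j (s * a) - s * (a / 2 ^ (j * k)) := by
  rcases eq_or_lt_of_le ha with h0 | h0
  · simp [P, ← h0]
  set q := a / 2 ^ (j * k) with hq
  have key : ∀ s' : ℤ, s' * (q % 2 ^ k) - s' * q = -(s' * (2 ^ k * (q / 2 ^ k))) := by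
    intro s'
    rw [Int.emod_def]; ring
  rcases hs with h | h | h <;> subst h
  · have h1 : ((-1 : ℤ) * a).sign = -1 := Int.sign_eq_neg_one_iff_neg.mpr (by linarith)
    have h2 : |(-1 : ℤ) * a| = a := by
      rw [abs_mul, abs_neg, abs_one, one_mul, abs_of_pos h0]
    rw [P, h1, h2, ← hq, key]
    exact dvd_neg.mpr ⟨-1 * (q / 2 ^ k), by ring⟩
  · simp [P]
  · have h1 : ((1 : ℤ) * a).sign = 1 := Int.sign_eq_one_iff_pos.mpr (by linarith)
    have h2 : |(1 : ℤ) * a| = a := by rw [one_mul, abs_of_pos h0]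
    rw [P, h1, h2, ← hq, key]
    exact dvd_neg.mpr ⟨1 * (q / 2 ^ k), by ring⟩

theorem digit_sum_small_mod_of_shift
    (r : ℕ) (hr : 1 ≤ r) (y : Fin r → ℤ) (hsum : ∑ i, y i = 0)
    (t k : ℕ) (ht : Nat.clog 2 r < t) (hk : Nat.clog 2 r < k) :
    ∀ j : ℕ, ∃ δ : ℤ, |δ| < (r : ℤ) ∧
      (2 ^ k : ℤ) ∣ (∑ i, P k j ((y i).sign * (|y i| / 2 ^ t))) - δ := by
  intro j
  set N : ℕ := t + j * k with hN
  have hpos : (0 : ℤ) < 2 ^ N := by positivity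
  refine ⟨∑ i, (y i).sign * (|y i| / 2 ^ N), ?_, ?_⟩
  · -- bound on |δ|
    have key : (2 : ℤ) ^ N * ∑ i, (y i).sign * (|y i| / 2 ^ N)
        = - ∑ i, (y i).sign * (|y i| % 2 ^ N) := by
      rw [Finset.mul_sum]
      have hterm : ∀ i : Fin r, (2 : ℤ) ^ N * ((y i).sign * (|y i| / 2 ^ N))
          = y i - (y i).sign * (|y i| % 2 ^ N) := by
        intro i
        have h1 : (y i).sign * |y i| = y i := Int.sign_mul_abs _
        have h2 : |y i| % 2 ^ N = |y i| - 2 ^ N * (|y i| / 2 ^ N) := Int.emod_def _ _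
        have h3 : (y i).sign * (|y i| - 2 ^ N * (|y i| / 2 ^ N))
            = y i - (y i).sign * (2 ^ N * (|y i| / 2 ^ N)) := by rw [mul_sub, h1]
        rw [h2, h3]; ring
      rw [Finset.sum_congr rfl (fun i _ => hterm i), Finset.sum_sub_distrib, hsum,
        zero_sub]
    have hb : |∑ i, (y i).sign * (|y i| % 2 ^ N)| ≤ (r : ℤ) * (2 ^ N - 1) := by
      calc |∑ i, (y i).sign * (|y i| % 2 ^ N)|
          ≤ ∑ i, |(y i).sign * (|y i| % 2 ^ N)| := Finset.abs_sum_le_sum_abs _ _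
        _ ≤ ∑ _i : Fin r, ((2 : ℤ) ^ N - 1) := by
            refine Finset.sum_le_sum fun i _ => ?_
            have hm0 : (0 : ℤ) ≤ |y i| % 2 ^ N := Int.emod_nonneg _ (by positivity)
            have hm1 : |y i| % 2 ^ N < 2 ^ N := Int.emod_lt_of_pos _ hpos
            have habs : |(y i).sign| ≤ 1 := by
              rcases sign_cases (y i) with h | h | h <;> simp [h]
            calc |(y i).sign * (|y i| % 2 ^ N)|
                = |(y i).sign| * abs (|y i| % 2 ^ N) := abs_mul _ _
              _ ≤ 1 * abs (|y i| % 2 ^ N) :=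
                  mul_le_mul_of_nonneg_right habs (abs_nonneg _)
              _ = |y i| % 2 ^ N := by rw [one_mul, abs_of_nonneg hm0]
              _ ≤ 2 ^ N - 1 := by linarith
        _ = (r : ℤ) * (2 ^ N - 1) := by
            rw [Finset.sum_const, Finset.card_univ, Fintype.card_fin, nsmul_eq_mul]
    have h4 : |(2 : ℤ) ^ N * ∑ i, (y i).sign * (|y i| / 2 ^ N)| ≤ (r : ℤ) * (2 ^ N - 1) := by
      rw [key, abs_neg]; exact hb
    have h5 : (2 : ℤ) ^ N * |∑ i, (y i).sign * (|y i| / 2 ^ N)| ≤ (r : ℤ) * (2 ^ N - 1) := by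
      rwa [abs_mul, abs_of_pos hpos] at h4
    have hr' : (1 : ℤ) ≤ r := by exact_mod_cast hr
    by_contra hc
    push_neg at hc
    have h6 : (2 : ℤ) ^ N * (r : ℤ) ≤ 2 ^ N * |∑ i, (y i).sign * (|y i| / 2 ^ N)| :=
      mul_le_mul_of_nonneg_left hc (le_of_lt hpos)
    nlinarith
  · -- divisibility
    rw [← Finset.sum_sub_distrib]
    refine Finset.dvd_sum fun i _ => ?_
    have ha : (0 : ℤ) ≤ |y i| / 2 ^ t := Int.ediv_nonneg (abs_nonneg _) (by positivity)
    have hrw : (y i).sign * (|y i| / 2 ^ N) = (y i).sign * ((|y i| / 2 ^ t) / 2 ^ (j * k)) := by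
      rw [ediv_pow_pow _ (abs_nonneg _) t (j * k), hN]
    rw [hrw]
    exact P_sub_dvd k j _ _ ha (sign_cases (y i))
end

section
/- Let r ≥ 1, let y₁, …, y_r be integers with ∑_{i=1}^{r} yᵢ = 0, and let k ≥ 1 and j be natural numbers. Then 2^{(j+1)·k} divides 2^{j·k} · ∑_{i=1}^{r} P^k_j(yᵢ) + ∑_{i=1}^{r} sign(yᵢ) · (|yᵢ| mod 2^{j·k}). -/
lemma pointwise (k j : ℕ) (z : ℤ) :
    2 ^ (j * k) * P k j z + z.sign * (|z| % 2 ^ (j * k)) =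
      z - 2 ^ ((j + 1) * k) * (z.sign * (|z| / 2 ^ ((j + 1) * k))) := by
  obtain ⟨a, ha⟩ : ∃ a : ℕ, |z| = a := ⟨|z|.toNat, (Int.toNat_of_nonneg (abs_nonneg z)).symm⟩
  have hN : (2 : ℤ) ^ ((j + 1) * k) = 2 ^ (j * k) * 2 ^ k := by ring
  have hdd : |z| / 2 ^ (j * k) / 2 ^ k = |z| / (2 ^ (j * k) * 2 ^ k) := by
    rw [ha]
    exact_mod_cast congrArg (Nat.cast : ℕ → ℤ) (Nat.div_div_eq_div_mul a (2 ^ (j * k)) (2 ^ k))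
  have h1 : |z| % 2 ^ (j * k) = |z| - 2 ^ (j * k) * (|z| / 2 ^ (j * k)) := by
    rw [Int.emod_def]
  have h2 : (|z| / 2 ^ (j * k)) % 2 ^ k
      = |z| / 2 ^ (j * k) - 2 ^ k * (|z| / 2 ^ (j * k) / 2 ^ k) := by
    rw [Int.emod_def]
  have hsz : z.sign * |z| = z := Int.sign_mul_abs z
  rw [P, hN, ← hdd]
  linear_combination (2 ^ (j * k) * z.sign) * h2 + z.sign * h1 + hsz

theorem key_congruence
    (r : ℕ) (hr : 1 ≤ r) (y : Fin r → ℤ) (hsum : ∑ i, y i = 0)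
    (k : ℕ) (hk : 1 ≤ k) (j : ℕ) :
    (2 ^ ((j + 1) * k) : ℤ) ∣
      2 ^ (j * k) * (∑ i, P k j (y i)) +
        ∑ i, (y i).sign * (|y i| % 2 ^ (j * k)) := by
  have h : 2 ^ (j * k) * (∑ i, P k j (y i)) +
        ∑ i, (y i).sign * (|y i| % 2 ^ (j * k)) =
      ∑ i, (2 ^ (j * k) * P k j (y i) + (y i).sign * (|y i| % 2 ^ (j * k))) := by
    rw [Finset.sum_add_distrib, Finset.mul_sum]
  rw [h, Finset.sum_congr rfl fun i _ => pointwise k j (y i), Finset.sum_sub_distrib,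
    hsum, zero_sub, ← Finset.mul_sum]
  exact dvd_neg.mpr ⟨_, rfl⟩
end
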